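/- Let ℓ ∈ (0,∞) and k ∈ K_ℓ, with K(s) = ∫₀ˢ k(θ) dθ. Then lim_{s→0⁺} K(s)/k(s) = 0 and lim_{s→0⁺} K(s)k'(s)/k(s)² = 1 − ℓ. Moreover, if k is non-decreasing then 0 < ℓ ≤ 1, and if k is non-increasing then ℓ ≥ 1. -/

import Mathlib

open Filter MeasureTheory Set Topology

noncomputable section

/-- `k ∈ K_ℓ`: `k` is a positive monotonic function in `C¹((0,μ)) ∩ L¹((0,μ))`
such that `(K/k)'(s) → ℓ` as `s → 0⁺`, where `K(s) = ∫₀ˢ k(θ) dθ`. -/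
def memK (ℓ μ : ℝ) (k : ℝ → ℝ) : Prop :=
  (∀ s ∈ Ioo (0:ℝ) μ, 0 < k s) ∧
  (MonotoneOn k (Ioo (0:ℝ) μ) ∨ AntitoneOn k (Ioo (0:ℝ) μ)) ∧
  ContDiffOn ℝ 1 k (Ioo (0:ℝ) μ) ∧
  IntegrableOn k (Ioo (0:ℝ) μ) ∧
  Tendsto (deriv fun s => (∫ θ in (0:ℝ)..s, k θ) / k s) (𝓝[>] (0:ℝ)) (𝓝 ℓ)

/-- For `k ∈ K_ℓ` with `ℓ ∈ (0,∞)`: `K/k → 0` and `K k'/k² → 1 - ℓ` as `s → 0⁺`;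
moreover `0 < ℓ ≤ 1` if `k` is non-decreasing and `ℓ ≥ 1` if `k` is non-increasing. -/
theorem memK_basic_properties (ℓ μ : ℝ) (hℓ : 0 < ℓ) (hμ : 0 < μ)
    (k : ℝ → ℝ) (hk : memK ℓ μ k) :
    Tendsto (fun s => (∫ θ in (0:ℝ)..s, k θ) / k s) (𝓝[>] (0:ℝ)) (𝓝 0) ∧
    Tendsto (fun s => (∫ θ in (0:ℝ)..s, k θ) * deriv k s / (k s) ^ 2)
      (𝓝[>] (0:ℝ)) (𝓝 (1 - ℓ)) ∧
    (MonotoneOn k (Ioo (0:ℝ) μ) → 0 < ℓ ∧ ℓ ≤ 1) ∧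
    (AntitoneOn k (Ioo (0:ℝ) μ) → 1 ≤ ℓ) := by
  obtain ⟨hpos, hmon, hC1, hint, hder⟩ := hk
  have hIooμ : Ioo (0:ℝ) μ ∈ 𝓝[>] (0:ℝ) := Ioo_mem_nhdsGT_of_mem ⟨le_refl 0, hμ⟩
  have hkc : ContinuousOn k (Ioo (0:ℝ) μ) := hC1.continuousOn
  -- interval integrability on `0..s` for `s ∈ (0, μ)`
  have hii : ∀ s ∈ Ioo (0:ℝ) μ, IntervalIntegrable k volume 0 s := by
    intro s hs
    rw [intervalIntegrable_iff_integrableOn_Ioc_of_le hs.1.le]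
    exact ((integrableOn_Ioc_iff_integrableOn_Ioo).mpr
      (hint.mono_set (fun x hx => ⟨hx.1, hx.2.trans hs.2⟩)))
  have hIocsub : ∀ s ∈ Ioo (0:ℝ) μ, Ioc (0:ℝ) s ⊆ Ioo (0:ℝ) μ :=
    fun s hs x hx => ⟨hx.1, lt_of_le_of_lt hx.2 hs.2⟩
  -- positivity of `K`
  have hKpos : ∀ s ∈ Ioo (0:ℝ) μ, 0 < ∫ θ in (0:ℝ)..s, k θ := by
    intro s hs
    exact intervalIntegral.intervalIntegral_pos_of_pos_on (hii s hs)
      (fun x hx => hpos x ⟨hx.1, hx.2.trans hs.2⟩) hs.1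
  -- `K s → 0` as `s → 0⁺`
  have hK0 : Tendsto (fun s => ∫ θ in (0:ℝ)..s, k θ) (𝓝[>] (0:ℝ)) (𝓝 0) := by
    have hμ2 : μ / 2 ∈ Ioo (0:ℝ) μ := ⟨half_pos hμ, half_lt_self hμ⟩
    have hii2 : IntervalIntegrable k volume (min 0 0) (max 0 (μ/2)) := by
      simpa [max_eq_right (half_pos hμ).le] using hii _ hμ2
    have hc := intervalIntegral.continuousWithinAt_primitive
      (b₀ := 0) (b₁ := 0) (b₂ := μ/2) (measure_singleton _) hii2
    rw [ContinuousWithinAt, intervalIntegral.integral_same] at hc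
    refine hc.mono_left ?_
    rw [← nhdsWithin_Ioo_eq_nhdsGT (half_pos hμ)]
    exact nhdsWithin_mono 0 Ioo_subset_Icc_self
  -- comparison with `s * k s`
  have hKle : MonotoneOn k (Ioo (0:ℝ) μ) →
      ∀ s ∈ Ioo (0:ℝ) μ, (∫ θ in (0:ℝ)..s, k θ) ≤ s * k s := by
    intro hm s hs
    rw [intervalIntegral.integral_of_le hs.1.le]
    have h1 : ∫ θ in Ioc (0:ℝ) s, k θ ≤ ∫ _θ in Ioc (0:ℝ) s, k s := by
      refine setIntegral_mono_on
        ((intervalIntegrable_iff_integrableOn_Ioc_of_le hs.1.le).mp (hii s hs))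
        ((integrableOn_const_iff).mpr (Or.inr (by simp [hs.1.le]))) measurableSet_Ioc ?_
      intro x hx
      exact hm ⟨hx.1, lt_of_le_of_lt hx.2 hs.2⟩ hs hx.2
    calc (∫ θ in Ioc (0:ℝ) s, k θ) ≤ ∫ _θ in Ioc (0:ℝ) s, k s := h1
      _ = s * k s := by
        simp [Real.volume_Ioc, ENNReal.toReal_ofReal hs.1.le, hs.1.le]
  have hKge : AntitoneOn k (Ioo (0:ℝ) μ) →
      ∀ s ∈ Ioo (0:ℝ) μ, s * k s ≤ ∫ θ in (0:ℝ)..s, k θ := by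
    intro ha s hs
    rw [intervalIntegral.integral_of_le hs.1.le]
    have h1 : ∫ _θ in Ioc (0:ℝ) s, k s ≤ ∫ θ in Ioc (0:ℝ) s, k θ := by
      refine setIntegral_mono_on
        ((integrableOn_const_iff).mpr (Or.inr (by simp [hs.1.le])))
        ((intervalIntegrable_iff_integrableOn_Ioc_of_le hs.1.le).mp (hii s hs))
        measurableSet_Ioc ?_
      intro x hx
      exact ha ⟨hx.1, lt_of_le_of_lt hx.2 hs.2⟩ hs hx.2
    calc s * k s = ∫ _θ in Ioc (0:ℝ) s, k s := by
          simp [Real.volume_Ioc, ENNReal.toReal_ofReal hs.1.le, hs.1.le]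
      _ ≤ _ := h1
  -- derivative of `K/k`
  have hgd : ∀ s ∈ Ioo (0:ℝ) μ, HasDerivAt (fun s => (∫ θ in (0:ℝ)..s, k θ) / k s)
      (1 - (∫ θ in (0:ℝ)..s, k θ) * deriv k s / (k s) ^ 2) s := by
    intro s hs
    have hks : ContinuousAt k s := hkc.continuousAt (isOpen_Ioo.mem_nhds hs)
    have hmeas : StronglyMeasurableAtFilter k (𝓝 s) :=
      hkc.stronglyMeasurableAtFilter isOpen_Ioo s hs
    have hKd : HasDerivAt (fun u => ∫ θ in (0:ℝ)..u, k θ) (k s) s :=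
      intervalIntegral.integral_hasDerivAt_right (hii s hs) hmeas hks
    have hkd : HasDerivAt k (deriv k s) s :=
      ((hC1.differentiableOn one_ne_zero).differentiableAt
        (isOpen_Ioo.mem_nhds hs)).hasDerivAt
    have hne : k s ≠ 0 := (hpos s hs).ne'
    have : HasDerivAt (fun y => (∫ θ in (0:ℝ)..y, k θ) / k y) _ s := hKd.div hkd hne
    convert this using 1
    field_simp
  have hderiv_eq : ∀ s ∈ Ioo (0:ℝ) μ,
      deriv (fun s => (∫ θ in (0:ℝ)..s, k θ) / k s) s
        = 1 - (∫ θ in (0:ℝ)..s, k θ) * deriv k s / (k s) ^ 2 :=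
    fun s hs => (hgd s hs).deriv
  -- Part 1 : `K/k → 0`
  have h1 : Tendsto (fun s => (∫ θ in (0:ℝ)..s, k θ) / k s) (𝓝[>] (0:ℝ)) (𝓝 0) := by
    rcases hmon with hm | ha
    · refine tendsto_of_tendsto_of_tendsto_of_le_of_le'
        (tendsto_const_nhds : Tendsto (fun _ : ℝ => (0:ℝ)) _ _)
        (tendsto_id.mono_right nhdsWithin_le_nhds) ?_ ?_
      · filter_upwards [hIooμ] with s hs
        exact div_nonneg (hKpos s hs).le (hpos s hs).le
      · filter_upwards [hIooμ] with s hs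
        rw [div_le_iff₀ (hpos s hs)]
        simpa [mul_comm] using hKle hm s hs
    · have hμ2 : μ / 2 ∈ Ioo (0:ℝ) μ := ⟨half_pos hμ, half_lt_self hμ⟩
      have hc : 0 < k (μ / 2) := hpos _ hμ2
      have hIoo2 : Ioo (0:ℝ) (μ/2) ∈ 𝓝[>] (0:ℝ) :=
        Ioo_mem_nhdsGT_of_mem ⟨le_refl 0, half_pos hμ⟩
      refine tendsto_of_tendsto_of_tendsto_of_le_of_le'
        (tendsto_const_nhds : Tendsto (fun _ : ℝ => (0:ℝ)) _ _)
        (by simpa using hK0.div_const (k (μ/2))) ?_ ?_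
      · filter_upwards [hIooμ] with s hs
        exact div_nonneg (hKpos s hs).le (hpos s hs).le
      · filter_upwards [hIoo2] with s hs
        have hsμ : s ∈ Ioo (0:ℝ) μ := ⟨hs.1, hs.2.trans (half_lt_self hμ)⟩
        have hks : k (μ/2) ≤ k s := ha hsμ hμ2 hs.2.le
        exact div_le_div_of_nonneg_left (hKpos s hsμ).le hc hks
  -- Part 2 : `K k' / k² → 1 - ℓ`
  have h2 : Tendsto (fun s => (∫ θ in (0:ℝ)..s, k θ) * deriv k s / (k s) ^ 2)
      (𝓝[>] (0:ℝ)) (𝓝 (1 - ℓ)) := by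
    have h := hder.const_sub 1
    refine h.congr' ?_
    filter_upwards [hIooμ] with s hs
    rw [hderiv_eq s hs]
    ring
  refine ⟨h1, h2, ?_, ?_⟩
  -- Part 3 : monotone ⇒ ℓ ≤ 1
  · intro hm
    refine ⟨hℓ, ?_⟩
    refine le_of_forall_pos_le_add (fun ε hε => ?_)
    have hev : ∀ᶠ s in 𝓝[>] (0:ℝ),
        ℓ - ε < deriv (fun s => (∫ θ in (0:ℝ)..s, k θ) / k s) s :=
      hder.eventually_const_lt (by linarith)
    have hIooev : ∀ᶠ s in 𝓝[>] (0:ℝ), s ∈ Ioo (0:ℝ) μ := hIooμ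
    obtain ⟨δ, hδpos, hsub⟩ :=
      mem_nhdsGT_iff_exists_Ioo_subset.mp (hev.and hIooev)
    rw [mem_Ioi] at hδpos
    set t : ℝ := δ / 2 with ht
    have htδ : t ∈ Ioo (0:ℝ) δ := ⟨half_pos hδpos, half_lt_self hδpos⟩
    have htμ : t ∈ Ioo (0:ℝ) μ := (hsub htδ).2
    have key : ∀ a ∈ Ioo (0:ℝ) t, (ℓ - ε) * (t - a) ≤ t := by
      intro a ha
      have hIcc : Icc a t ⊆ Ioo (0:ℝ) δ :=
        fun x hx => ⟨ha.1.trans_le hx.1, lt_of_le_of_lt hx.2 htδ.2⟩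
      have hIccμ : Icc a t ⊆ Ioo (0:ℝ) μ := fun x hx => (hsub (hIcc hx)).2
      have hgcont : ContinuousOn (fun s => (∫ θ in (0:ℝ)..s, k θ) / k s) (Icc a t) :=
        fun x hx => ((hgd x (hIccμ hx)).continuousAt).continuousWithinAt
      have hgdiff : DifferentiableOn ℝ (fun s => (∫ θ in (0:ℝ)..s, k θ) / k s)
          (interior (Icc a t)) := by
        rw [interior_Icc]
        exact fun x hx =>
          ((hgd x (hIccμ (Ioo_subset_Icc_self hx))).differentiableAt).differentiableWithinAt
      have hder_ge : ∀ x ∈ interior (Icc a t),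
          ℓ - ε ≤ deriv (fun s => (∫ θ in (0:ℝ)..s, k θ) / k s) x := by
        rw [interior_Icc]
        intro x hx
        exact ((hsub (hIcc (Ioo_subset_Icc_self hx))).1).le
      have hmvt := (convex_Icc a t).mul_sub_le_image_sub_of_le_deriv hgcont hgdiff hder_ge
        a ⟨le_refl a, ha.2.le⟩ t ⟨ha.2.le, le_refl t⟩ ha.2.le
      have haμ : a ∈ Ioo (0:ℝ) μ := hIccμ ⟨le_refl a, ha.2.le⟩
      have hga : 0 ≤ (∫ θ in (0:ℝ)..a, k θ) / k a :=
        div_nonneg (hKpos a haμ).le (hpos a haμ).le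
      have hgt : (∫ θ in (0:ℝ)..t, k θ) / k t ≤ t := by
        rw [div_le_iff₀ (hpos t htμ)]
        simpa [mul_comm] using hKle hm t htμ
      linarith
    have hlim : Tendsto (fun a => (ℓ - ε) * (t - a)) (𝓝[>] (0:ℝ)) (𝓝 ((ℓ - ε) * t)) := by
      have : ContinuousAt (fun a : ℝ => (ℓ - ε) * (t - a)) 0 := by fun_prop
      have h0 := this.tendsto.mono_left (nhdsWithin_le_nhds (s := Ioi (0:ℝ)))
      simpa using h0
    have hfin : (ℓ - ε) * t ≤ t := by
      refine le_of_tendsto hlim ?_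
      filter_upwards [Ioo_mem_nhdsGT_of_mem ⟨le_refl (0:ℝ), htδ.1⟩] with a ha
      exact key a ha
    nlinarith [htδ.1]
  -- Part 4 : antitone ⇒ 1 ≤ ℓ
  · intro ha
    refine le_of_forall_pos_le_add (fun ε hε => ?_)
    have hev : ∀ᶠ s in 𝓝[>] (0:ℝ),
        deriv (fun s => (∫ θ in (0:ℝ)..s, k θ) / k s) s < ℓ + ε :=
      hder.eventually_lt_const (by linarith)
    have hIooev : ∀ᶠ s in 𝓝[>] (0:ℝ), s ∈ Ioo (0:ℝ) μ := hIooμ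
    obtain ⟨δ, hδpos, hsub⟩ :=
      mem_nhdsGT_iff_exists_Ioo_subset.mp (hev.and hIooev)
    rw [mem_Ioi] at hδpos
    set t : ℝ := δ / 2 with ht
    have htδ : t ∈ Ioo (0:ℝ) δ := ⟨half_pos hδpos, half_lt_self hδpos⟩
    have htμ : t ∈ Ioo (0:ℝ) μ := (hsub htδ).2
    have key : ∀ a ∈ Ioo (0:ℝ) t,
        t ≤ (∫ θ in (0:ℝ)..a, k θ) / k a + (ℓ + ε) * t := by
      intro a haa
      have hIcc : Icc a t ⊆ Ioo (0:ℝ) δ :=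
        fun x hx => ⟨haa.1.trans_le hx.1, lt_of_le_of_lt hx.2 htδ.2⟩
      have hIccμ : Icc a t ⊆ Ioo (0:ℝ) μ := fun x hx => (hsub (hIcc hx)).2
      have hgcont : ContinuousOn (fun s => (∫ θ in (0:ℝ)..s, k θ) / k s) (Icc a t) :=
        fun x hx => ((hgd x (hIccμ hx)).continuousAt).continuousWithinAt
      have hgdiff : DifferentiableOn ℝ (fun s => (∫ θ in (0:ℝ)..s, k θ) / k s)
          (interior (Icc a t)) := by
        rw [interior_Icc]
        exact fun x hx =>
          ((hgd x (hIccμ (Ioo_subset_Icc_self hx))).differentiableAt).differentiableWithinAt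
      have hder_le : ∀ x ∈ interior (Icc a t),
          deriv (fun s => (∫ θ in (0:ℝ)..s, k θ) / k s) x ≤ ℓ + ε := by
        rw [interior_Icc]
        intro x hx
        exact ((hsub (hIcc (Ioo_subset_Icc_self hx))).1).le
      have hmvt := (convex_Icc a t).image_sub_le_mul_sub_of_deriv_le hgcont hgdiff hder_le
        a ⟨le_refl a, haa.2.le⟩ t ⟨haa.2.le, le_refl t⟩ haa.2.le
      have hgt : t ≤ (∫ θ in (0:ℝ)..t, k θ) / k t := by
        rw [le_div_iff₀ (hpos t htμ)]
        simpa [mul_comm] using hKge ha t htμ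
      have hℓε : (0:ℝ) ≤ ℓ + ε := by linarith
      have h2 : (ℓ + ε) * (t - a) ≤ (ℓ + ε) * t := by
        apply mul_le_mul_of_nonneg_left _ hℓε
        linarith [haa.1]
      linarith
    have hlim : Tendsto (fun a => (∫ θ in (0:ℝ)..a, k θ) / k a + (ℓ + ε) * t)
        (𝓝[>] (0:ℝ)) (𝓝 ((ℓ + ε) * t)) := by
      have := h1.add_const ((ℓ + ε) * t)
      simpa using this
    have hfin : t ≤ (ℓ + ε) * t := by
      refine ge_of_tendsto hlim ?_
      filter_upwards [Ioo_mem_nhdsGT_of_mem ⟨le_refl (0:ℝ), htδ.1⟩] with a haa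
      exact key a haa
    nlinarith [htδ.1]
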